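/- For all t₁, t₂ ∈ ℝ and every k ∈ SU(2), letting M = a_{t₁}·k·a_{t₂} (a product of 2×2 complex matrices) one has Re(trace(M·M*)) = 2 cosh t₁ cosh t₂ + 2 (2|k₁₁|² − 1) sinh t₁ sinh t₂, where M* is the conjugate transpose and k₁₁ is the (1,1) entry of k. -/

import Mathlib

open Matrix

noncomputable section

/-- `SU2` is the special unitary group of `2 × 2` complex matrices. -/
abbrev SU2 : Type := ↥(Matrix.specialUnitaryGroup (Fin 2) ℂ)

/-- The diagonal matrix `a_t = diag (e^{t/2}, e^{-t/2})` in `SL(2, ℂ)`. -/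
def aMatC (t : ℝ) : Matrix (Fin 2) (Fin 2) ℂ :=
  !![(Real.exp (t / 2) : ℂ), 0; 0, (Real.exp (-t / 2) : ℂ)]

set_option maxHeartbeats 800000 in
/-- The Cartan radial coordinate of `a_{t₁} k a_{t₂}` for `k ∈ SU(2)`:
`Re (trace (M M*)) = 2 cosh t₁ cosh t₂ + 2 (2 |k₁₁|² - 1) sinh t₁ sinh t₂`. -/
theorem re_trace_mul_conjTranspose_aMatC_su2_aMatC (t₁ t₂ : ℝ) (k : SU2) :
    (((aMatC t₁ * (k : Matrix (Fin 2) (Fin 2) ℂ) * aMatC t₂) *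
        (aMatC t₁ * (k : Matrix (Fin 2) (Fin 2) ℂ) * aMatC t₂)ᴴ).trace).re
      = 2 * Real.cosh t₁ * Real.cosh t₂ +
          2 * (2 * ‖(k : Matrix (Fin 2) (Fin 2) ℂ) 0 0‖ ^ 2 - 1) *
            Real.sinh t₁ * Real.sinh t₂ := by
  obtain ⟨K, hK⟩ := k
  rw [Matrix.mem_specialUnitaryGroup_iff] at hK
  obtain ⟨hu, hdet⟩ := hK
  rw [Matrix.mem_unitaryGroup_iff'] at hu
  have hu2 : Kᴴ * K = 1 := by rw [← Matrix.star_eq_conjTranspose]; exact hu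
  have hu' : K * Kᴴ = 1 := by
    rw [← Matrix.star_eq_conjTranspose, ← Matrix.mem_unitaryGroup_iff]
    exact Matrix.mem_unitaryGroup_iff'.mpr hu
  have h00 : (Kᴴ * K) 0 0 = 1 := by rw [hu2]; simp
  have h11 : (Kᴴ * K) 1 1 = 1 := by rw [hu2]; simp
  have h00' : (K * Kᴴ) 0 0 = 1 := by rw [hu']; simp
  simp only [Matrix.mul_apply, Fin.sum_univ_two, Matrix.conjTranspose_apply] at h00 h11 h00'
  have ha : Complex.normSq (K 0 0) + Complex.normSq (K 1 0) = 1 := by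
    have := congrArg Complex.re h00
    simpa [mul_comm, Complex.normSq_eq_conj_mul_self, Complex.add_re, Complex.normSq_apply] using this
  have hb : Complex.normSq (K 0 1) + Complex.normSq (K 1 1) = 1 := by
    have := congrArg Complex.re h11
    simpa [Complex.normSq_eq_conj_mul_self, Complex.add_re, Complex.normSq_apply] using this
  have hc : Complex.normSq (K 0 0) + Complex.normSq (K 0 1) = 1 := by
    have := congrArg Complex.re h00'
    simpa [mul_comm, Complex.normSq_eq_conj_mul_self, Complex.add_re, Complex.normSq_apply] using this
  have habs : ‖K 0 0‖ ^ 2 = Complex.normSq (K 0 0) := Complex.sq_norm _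
  have hM : aMatC t₁ * K * aMatC t₂ =
      !![(Real.exp (t₁/2) * Real.exp (t₂/2) : ℂ) * K 0 0,
         (Real.exp (t₁/2) * Real.exp (-t₂/2) : ℂ) * K 0 1;
         (Real.exp (-t₁/2) * Real.exp (t₂/2) : ℂ) * K 1 0,
         (Real.exp (-t₁/2) * Real.exp (-t₂/2) : ℂ) * K 1 1] := by
    rw [Matrix.eta_fin_two K]
    simp only [aMatC, Matrix.mul_fin_two, Matrix.cons_val_zero, Matrix.cons_val_one,
      Matrix.head_cons, Matrix.of_apply, mul_zero, zero_mul, add_zero, zero_add]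
    ring_nf
  rw [hM, habs]
  simp only [Matrix.trace_fin_two, Matrix.mul_apply, Fin.sum_univ_two,
    Matrix.conjTranspose_apply, Matrix.cons_val', Matrix.cons_val_zero,
    Matrix.cons_val_one, Matrix.head_cons, Matrix.empty_val', Matrix.cons_val_fin_one,
    Matrix.head_fin_const, Matrix.of_apply, Complex.star_def, Complex.mul_conj, Complex.normSq_mul,
    Complex.normSq_ofReal, Complex.add_re, Complex.ofReal_re]
  set a := Complex.normSq (K 0 0)
  have hnb : Complex.normSq (K 0 1) = 1 - a := by linarith
  have hnc : Complex.normSq (K 1 0) = 1 - a := by linarith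
  have hnd : Complex.normSq (K 1 1) = a := by linarith
  rw [hnb, hnc, hnd, Real.cosh_eq, Real.cosh_eq, Real.sinh_eq, Real.sinh_eq]
  have e1 : Real.exp (t₁/2) * Real.exp (t₁/2) = Real.exp t₁ := by
    rw [← Real.exp_add]; ring_nf
  have e2 : Real.exp (t₂/2) * Real.exp (t₂/2) = Real.exp t₂ := by
    rw [← Real.exp_add]; ring_nf
  have e1' : Real.exp (-t₁/2) * Real.exp (-t₁/2) = Real.exp (-t₁) := by
    rw [← Real.exp_add]; ring_nf
  have e2' : Real.exp (-t₂/2) * Real.exp (-t₂/2) = Real.exp (-t₂) := by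
    rw [← Real.exp_add]; ring_nf
  linear_combination
    (Real.exp (t₂/2) * Real.exp (t₂/2) * a
      + Real.exp (-t₂/2) * Real.exp (-t₂/2) * (1 - a)) * e1
    + (Real.exp (t₂/2) * Real.exp (t₂/2) * (1 - a)
      + Real.exp (-t₂/2) * Real.exp (-t₂/2) * a) * e1'
    + (Real.exp t₁ * a + Real.exp (-t₁) * (1 - a)) * e2
    + (Real.exp t₁ * (1 - a) + Real.exp (-t₁) * a) * e2'
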